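/- For every even-degree form p ∈ ℝ[x₁,...,xₙ], the following are equivalent: (a) there exists r ∈ ℕ₀ such that (Σᵢ xᵢ²)^r · p is a sum of squares of polynomials; (b) p belongs to Σ + ℝ[x]·(1 - Σᵢ xᵢ²), where Σ is the set of sums of squares. -/

import Mathlib

open MvPolynomial

def IsSOS {n : ℕ} (f : MvPolynomial (Fin n) ℝ) : Prop :=
  ∃ (m : ℕ) (p : Fin m → MvPolynomial (Fin n) ℝ), f = ∑ i, (p i) ^ 2

lemma scale_eval {n d : ℕ} {S : Type*} [CommRing S]
    (f : MvPolynomial (Fin n) ℝ →+* S) (w : S) {p : MvPolynomial (Fin n) ℝ}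
    (hp : p.IsHomogeneous d) :
    eval₂ (f.comp (C : ℝ →+* MvPolynomial (Fin n) ℝ)) (fun i => f (X i) * w) p
      = f p * w ^ d := by
  rw [eval₂_eq']
  conv_rhs => rw [p.as_sum]
  rw [map_sum, Finset.sum_mul]
  apply Finset.sum_congr rfl
  intro u hu
  have hd : ∑ i, u i = d := by
    have h1 := hp (mem_support_iff.mp hu)
    rw [Finsupp.weight_apply] at h1
    rw [← h1, Finsupp.sum_fintype]
    · simp
    · intro i; rfl
  have hmon : (monomial u (coeff u p)) = C (coeff u p) * ∏ i, X i ^ u i := by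
    rw [monomial_eq, Finsupp.prod_fintype]
    intro i; exact pow_zero _
  rw [hmon, map_mul, map_prod]
  simp only [RingHom.coe_comp, Function.comp_apply, mul_pow, map_pow]
  rw [Finset.prod_mul_distrib, Finset.prod_pow_eq_pow_sum, hd, mul_assoc]

lemma adjoinroot_decomp {L : Type*} [CommRing L] [Nontrivial L] (f : Polynomial L)
    (hf : f.Monic) (hdeg : f.degree = 2) (z : AdjoinRoot f) :
    ∃ a b : L, z = algebraMap L _ a + algebraMap L _ b * AdjoinRoot.root f := by
  obtain ⟨q, rfl⟩ := AdjoinRoot.mk_surjective z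
  refine ⟨(q %ₘ f).coeff 0, (q %ₘ f).coeff 1, ?_⟩
  have h1 : AdjoinRoot.mk f q = AdjoinRoot.mk f (q %ₘ f) := by
    rw [AdjoinRoot.mk_eq_mk, Polynomial.modByMonic_eq_sub_mul_div q f]
    exact ⟨q /ₘ f, by ring⟩
  have h2 : (q %ₘ f).degree ≤ 1 := by
    have h := Polynomial.degree_modByMonic_lt q hf
    rw [hdeg] at h
    exact Order.le_of_lt_succ (by exact_mod_cast h)
  rw [h1]
  conv_lhs => rw [Polynomial.eq_X_add_C_of_degree_le_one h2]
  rw [map_add, map_mul, AdjoinRoot.mk_C, AdjoinRoot.mk_C, AdjoinRoot.mk_X,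
    AdjoinRoot.algebraMap_eq]
  ring

lemma sq_decomp {L : Type*} [CommRing L] [IsDomain L] [CharZero L] (c : L) {m : ℕ}
    (f : Polynomial L) (hfm : f.Monic) (hfdeg : f.degree = 2)
    (hc : (AdjoinRoot.root f) ^ 2 = algebraMap L _ c)
    (h0 : f.eval₂ (algebraMap L (AdjoinRoot f)) (-(AdjoinRoot.root f)) = 0)
    (z : L) (cK : Fin m → AdjoinRoot f)
    (hz : algebraMap L _ z = ∑ i, cK i ^ 2) :
    ∃ a b : Fin m → L, z = ∑ i, (a i ^ 2 + c * b i ^ 2) := by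
  set j : L →+* AdjoinRoot f := algebraMap L (AdjoinRoot f) with hj
  have hjinj : Function.Injective j := by
    rw [hj, AdjoinRoot.algebraMap_eq]
    exact AdjoinRoot.of.injective_of_degree_ne_zero (by rw [hfdeg]; norm_num)
  set ρ : AdjoinRoot f := AdjoinRoot.root f with hρdef
  have hρ : ρ ^ 2 = j c := hc
  set τ := AdjoinRoot.lift j (-ρ) h0 with hτdef
  have hτρ : τ ρ = -ρ := AdjoinRoot.lift_root h0
  have hτj : ∀ x : L, τ (j x) = j x := fun x => AdjoinRoot.lift_of h0
  choose a b hab using fun i => adjoinroot_decomp f hfm hfdeg (cK i)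
  refine ⟨a, b, ?_⟩
  have hid1 : j z = ∑ i, (j (a i) + j (b i) * ρ) ^ 2 := by
    rw [hz]
    exact Finset.sum_congr rfl fun i _ => by rw [hab i]
  have hid2 : j z = ∑ i, (j (a i) - j (b i) * ρ) ^ 2 := by
    have h3 := congrArg τ hid1
    rw [hτj] at h3
    rw [h3, map_sum]
    refine Finset.sum_congr rfl fun i _ => ?_
    rw [map_pow, map_add, map_mul, hτρ, hτj, hτj]
    ring
  have hsum : j (2 * z) = j (2 * ∑ i, (a i ^ 2 + c * b i ^ 2)) := by
    rw [map_mul, map_mul, map_ofNat, two_mul, two_mul]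
    calc j z + j z
        = ∑ i, ((j (a i) + j (b i) * ρ) ^ 2 + (j (a i) - j (b i) * ρ) ^ 2) := by
          nth_rewrite 2 [hid2]
          rw [hid1, ← Finset.sum_add_distrib]
      _ = ∑ i, (j (a i ^ 2 + c * b i ^ 2) + j (a i ^ 2 + c * b i ^ 2)) := by
          refine Finset.sum_congr rfl fun i _ => ?_
          have expand : (j (a i) + j (b i) * ρ) ^ 2 + (j (a i) - j (b i) * ρ) ^ 2
              = (j (a i) ^ 2 + j (b i) ^ 2 * ρ ^ 2) * 2 := by ring
          rw [expand, hρ, map_add, map_pow, map_mul, map_pow]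
          ring
      _ = j (∑ i, (a i ^ 2 + c * b i ^ 2)) + j (∑ i, (a i ^ 2 + c * b i ^ 2)) := by
          rw [Finset.sum_add_distrib, map_sum]
  have h2z : (2 : L) * z = 2 * ∑ i, (a i ^ 2 + c * b i ^ 2) := hjinj hsum
  exact mul_left_cancel₀ two_ne_zero h2z

lemma IsSOS.add {n : ℕ} {f g : MvPolynomial (Fin n) ℝ} (hf : IsSOS f) (hg : IsSOS g) :
    IsSOS (f + g) := by
  obtain ⟨m, p, rfl⟩ := hf; obtain ⟨m', q, rfl⟩ := hg
  exact ⟨m + m', Fin.append p q, by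
    rw [Fin.sum_univ_add]; simp [Fin.append_left, Fin.append_right]⟩

lemma IsSOS.mul {n : ℕ} {f g : MvPolynomial (Fin n) ℝ} (hf : IsSOS f) (hg : IsSOS g) :
    IsSOS (f * g) := by
  obtain ⟨m, p, rfl⟩ := hf; obtain ⟨m', q, rfl⟩ := hg
  refine ⟨m * m', fun k => p (finProdFinEquiv.symm k).1 * q (finProdFinEquiv.symm k).2, ?_⟩
  rw [← Equiv.sum_comp finProdFinEquiv
    (fun k => (p (finProdFinEquiv.symm k).1 * q (finProdFinEquiv.symm k).2) ^ 2)]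
  simp only [Equiv.symm_apply_apply]
  rw [Finset.sum_mul_sum, Fintype.sum_prod_type]
  exact Finset.sum_congr rfl fun i _ => Finset.sum_congr rfl fun j _ => (mul_pow _ _ _).symm

lemma IsSOS.pow {n : ℕ} {f : MvPolynomial (Fin n) ℝ} (hf : IsSOS f) (k : ℕ) :
    IsSOS (f ^ k) := by
  induction k with
  | zero => exact ⟨1, fun _ => 1, by simp⟩
  | succ k ih => rw [pow_succ]; exact ih.mul hf

lemma isSOS_sumsq {n : ℕ} : IsSOS (∑ i, (X i : MvPolynomial (Fin n) ℝ) ^ 2) :=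
  ⟨n, X, rfl⟩

set_option maxHeartbeats 1000000 in
theorem reznick_iff_sphere_module {n d : ℕ} (p : MvPolynomial (Fin n) ℝ)
    (hp : p.IsHomogeneous d) (hd : Even d) :
    (∃ r : ℕ, IsSOS ((∑ i, X i ^ 2) ^ r * p)) ↔
      ∃ σ g : MvPolynomial (Fin n) ℝ, IsSOS σ ∧
        g ∈ Ideal.span {(1 : MvPolynomial (Fin n) ℝ) - ∑ i, X i ^ 2} ∧
        p = σ + g := by
  constructor
  · rintro ⟨r, hsos⟩
    refine ⟨(∑ i, X i ^ 2) ^ r * p, (1 - (∑ i, X i ^ 2) ^ r) * p, hsos, ?_, by ring⟩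
    rw [Ideal.mem_span_singleton]
    exact dvd_mul_of_dvd_left
      (by simpa using sub_dvd_pow_sub_pow (1 : MvPolynomial (Fin n) ℝ) (∑ i, X i ^ 2) r) p
  · rintro ⟨σ, g, hσ, hg, hpsg⟩
    obtain ⟨e, hde⟩ := hd
    set s : MvPolynomial (Fin n) ℝ := ∑ i, X i ^ 2 with hs
    have hshom : s.IsHomogeneous 2 := by
      apply IsHomogeneous.sum
      intro i _
      simpa using (isHomogeneous_X ℝ i).pow 2
    by_cases hs0 : s = 0
    · exact ⟨1, by rw [pow_one, hs0, zero_mul]; exact ⟨0, fun i => 0, by simp⟩⟩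
    obtain ⟨m, q, hσq⟩ := hσ
    obtain ⟨h, hgh⟩ := Ideal.mem_span_singleton.mp hg
    clear_value s
    set L := Localization.Away s with hL
    haveI : IsDomain L := IsLocalization.isDomain_of_le_nonZeroDivisors
      (R := MvPolynomial (Fin n) ℝ) (S := L) (hM := powers_le_nonZeroDivisors_of_noZeroDivisors hs0)
    have hinj : Function.Injective (algebraMap (MvPolynomial (Fin n) ℝ) L) :=
      IsLocalization.injective L (powers_le_nonZeroDivisors_of_noZeroDivisors hs0)
    haveI : CharZero L := (RingHom.charZero_iff hinj).mp inferInstance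
    set s' : L := algebraMap (MvPolynomial (Fin n) ℝ) L s with hs'
    set t : L := IsLocalization.Away.invSelf (S := L) s with ht
    have hst : s' * t = 1 := IsLocalization.Away.mul_invSelf s
    have hfm : (Polynomial.X ^ 2 - Polynomial.C s' : Polynomial L).Monic :=
      Polynomial.monic_X_pow_sub_C s' two_ne_zero
    have hfdeg : (Polynomial.X ^ 2 - Polynomial.C s' : Polynomial L).degree = 2 := by
      rw [Polynomial.degree_X_pow_sub_C (by norm_num) s']; rfl
    set K := AdjoinRoot (Polynomial.X ^ 2 - Polynomial.C s' : Polynomial L) with hK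
    set j : L →+* K := algebraMap L K with hj
    set ρ : K := AdjoinRoot.root (Polynomial.X ^ 2 - Polynomial.C s' : Polynomial L)
      with hρdef
    have hρ : ρ ^ 2 = j s' := by
      have h0 := AdjoinRoot.eval₂_root (Polynomial.X ^ 2 - Polynomial.C s' : Polynomial L)
      simp only [Polynomial.eval₂_sub, Polynomial.eval₂_pow, Polynomial.eval₂_X,
        Polynomial.eval₂_C] at h0
      rw [hρdef, hj, AdjoinRoot.algebraMap_eq, ← sub_eq_zero]
      exact h0
    have h0 : (Polynomial.X ^ 2 - Polynomial.C s' : Polynomial L).eval₂ j (-ρ) = 0 := by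
      simp only [Polynomial.eval₂_sub, Polynomial.eval₂_pow, Polynomial.eval₂_X,
        Polynomial.eval₂_C]
      rw [neg_pow, hρ]
      simp
    set w : K := ρ * j t with hw
    have hw2 : w ^ 2 = j t := by
      rw [hw, mul_pow, hρ, ← map_pow, ← map_mul]
      congr 1
      calc s' * t ^ 2 = (s' * t) * t := by ring
        _ = t := by rw [hst, one_mul]
    set ι : MvPolynomial (Fin n) ℝ →+* K :=
      j.comp (algebraMap (MvPolynomial (Fin n) ℝ) L) with hι
    set Φ : MvPolynomial (Fin n) ℝ →+* K := eval₂Hom (ι.comp C) (fun i => ι (X i) * w)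
      with hΦdef
    have hΦ : ∀ (u : MvPolynomial (Fin n) ℝ) (k : ℕ),
        u.IsHomogeneous k → Φ u = ι u * w ^ k := by
      intro u k hu
      rw [hΦdef, coe_eval₂Hom]
      exact scale_eval ι w hu
    have hΦs : Φ s = 1 := by
      rw [hΦ s 2 hshom, hw2, hι, RingHom.comp_apply, ← hs', ← map_mul, hst, map_one]
    have hmain : Φ p = ∑ i, (Φ (q i)) ^ 2 := by
      rw [hpsg, hgh, map_add, map_mul, map_sub, map_one, hΦs, sub_self, zero_mul,
        add_zero, hσq, map_sum]
      simp [map_pow]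
    have hΦp : Φ p = j (algebraMap (MvPolynomial (Fin n) ℝ) L p * t ^ e) := by
      rw [hΦ p d hp, hde, ← two_mul, pow_mul, hw2, map_mul, map_pow, hι,
        RingHom.comp_apply]
    have hz : algebraMap L K (algebraMap (MvPolynomial (Fin n) ℝ) L p * t ^ e)
        = ∑ i, (Φ (q i)) ^ 2 := by rw [← hj, ← hΦp, hmain]
    obtain ⟨a, b, hLid⟩ := sq_decomp s' _ hfm hfdeg hρ h0 _ (fun i => Φ (q i)) hz
    have hL2 : algebraMap (MvPolynomial (Fin n) ℝ) L p
        = s' ^ e * ∑ i, (a i ^ 2 + s' * b i ^ 2) := by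
      have h1 : s' ^ e * t ^ e = 1 := by rw [← mul_pow, hst, one_pow]
      calc algebraMap (MvPolynomial (Fin n) ℝ) L p
          = algebraMap (MvPolynomial (Fin n) ℝ) L p * (s' ^ e * t ^ e) := by
            rw [h1, mul_one]
        _ = s' ^ e * (algebraMap (MvPolynomial (Fin n) ℝ) L p * t ^ e) := by ring
        _ = s' ^ e * ∑ i, (a i ^ 2 + s' * b i ^ 2) := by rw [hLid]
    have hden : ∀ x : L, ∃ N : ℕ, ∀ M, N ≤ M →
        ∃ γ : MvPolynomial (Fin n) ℝ, algebraMap (MvPolynomial (Fin n) ℝ) L γ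
          = s' ^ M * x := by
      intro x
      obtain ⟨⟨r0, u⟩, hu⟩ := IsLocalization.surj (Submonoid.powers s) x
      obtain ⟨N, hN⟩ := u.2
      refine ⟨N, fun M hM => ⟨s ^ (M - N) * r0, ?_⟩⟩
      have hN' : s ^ N = (u : MvPolynomial (Fin n) ℝ) := hN
      have hx : s' ^ N * x = algebraMap (MvPolynomial (Fin n) ℝ) L r0 := by
        rw [← hu, hs', ← map_pow, hN']
        ring
      rw [map_mul, map_pow, ← hx, ← hs']
      calc s' ^ (M - N) * (s' ^ N * x) = (s' ^ (M - N) * s' ^ N) * x := by ring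
        _ = s' ^ M * x := by rw [← pow_add, Nat.sub_add_cancel hM]
    choose Na hNa using fun i => hden (a i)
    choose Nb hNb using fun i => hden (b i)
    set M := Finset.univ.sup (fun i : Fin m => max (Na i) (Nb i)) with hM
    choose α hα using fun i : Fin m => hNa i M
      (le_trans (le_max_left _ _)
        (Finset.le_sup (f := fun i : Fin m => max (Na i) (Nb i)) (Finset.mem_univ i)))
    choose β hβ using fun i : Fin m => hNb i M
      (le_trans (le_max_right _ _)
        (Finset.le_sup (f := fun i : Fin m => max (Na i) (Nb i)) (Finset.mem_univ i)))
    have hterm : ∀ i : Fin m, algebraMap (MvPolynomial (Fin n) ℝ) L (α i ^ 2 + s * β i ^ 2)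
        = s' ^ (2 * M) * (a i ^ 2 + s' * b i ^ 2) := by
      intro i
      rw [map_add, map_pow, map_mul, map_pow, hα, hβ, ← hs']
      ring
    have hfinal : algebraMap (MvPolynomial (Fin n) ℝ) L (s ^ (2 * M) * p)
        = algebraMap (MvPolynomial (Fin n) ℝ) L
            (s ^ e * ∑ i, (α i ^ 2 + s * β i ^ 2)) := by
      rw [map_mul, map_mul, map_pow, map_pow, map_sum, hL2, ← hs']
      rw [Finset.sum_congr rfl fun i _ => hterm i, ← Finset.mul_sum]
      ring
    have hR : s ^ (2 * M) * p = s ^ e * ∑ i, (α i ^ 2 + s * β i ^ 2) := hinj hfinal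
    refine ⟨2 * M, ?_⟩
    have hsplit : s ^ e * ∑ i, (α i ^ 2 + s * β i ^ 2)
        = s ^ e * (∑ i, α i ^ 2) + s ^ (e + 1) * (∑ i, β i ^ 2) := by
      rw [Finset.sum_add_distrib, ← Finset.mul_sum]
      ring
    rw [hR, hsplit, hs]
    exact ((isSOS_sumsq.pow e).mul ⟨m, α, rfl⟩).add
      ((isSOS_sumsq.pow (e + 1)).mul ⟨m, β, rfl⟩)
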